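/- Let J ⊆ ℝ be an open interval, let ε₁, ε₂, ε₃ ∈ {−1, 1} with ε₁ε₂ = −ε₃, let ϱ ≠ 0 be a real constant, and set A := ε₁ + ε₂/ϱ². Let a, b, c, κ, τ : J → ℝ be differentiable functions satisfying the Sasakian Frenet–Reeb system a' = ε₂κb, b' = −ε₁κa − ε₃(τ−1)c, c' = ε₂(τ−1)b, together with the whirl condition a = ϱb on J. Assume that on J one has κ(s) > 0, a(s) ≠ 0, τ(s) ≠ 1, and A ≠ 0. Then for every s ∈ J the torsion function satisfies τ'(s) = (τ(s)−1)·( ε₂ε₃(τ(s)−1)²/(ϱκ(s)A) + κ'(s)/κ(s) + ε₂κ(s)/ϱ ). -/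

import Mathlib

/-- **Torsion equation for non-geodesic contact whirl curves (Proposition 3.1).**
On an open interval `J = Ioo p q`, with causal signs `ε₁ ε₂ = -ε₃`, whirl parameter
`ϱ ≠ 0` and `A = ε₁ + ε₂/ϱ²`, the Sasakian Frenet–Reeb system
`a' = ε₂ κ b`, `b' = -ε₁ κ a - ε₃ (τ-1) c`, `c' = ε₂ (τ-1) b` together with the
whirl condition `a = ϱ b` forces the torsion to satisfy
`τ' = (τ-1) ( ε₂ε₃(τ-1)²/(ϱ κ A) + κ'/κ + ε₂ κ/ϱ )`, provided `κ > 0`, `a ≠ 0`,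
`τ ≠ 1` and `A ≠ 0` on `J`. -/
theorem torsion_equation_contact_whirl
    (p q : ℝ) (ε₁ ε₂ ε₃ ϱ A : ℝ)
    (hε₁ : ε₁ = 1 ∨ ε₁ = -1) (hε₂ : ε₂ = 1 ∨ ε₂ = -1) (hε₃ : ε₃ = 1 ∨ ε₃ = -1)
    (hsign : ε₁ * ε₂ = -ε₃) (hϱ : ϱ ≠ 0)
    (hAdef : A = ε₁ + ε₂ / ϱ ^ 2)
    (a b c κ τ : ℝ → ℝ)
    (hκdiff : ∀ s ∈ Set.Ioo p q, DifferentiableAt ℝ κ s)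
    (hτdiff : ∀ s ∈ Set.Ioo p q, DifferentiableAt ℝ τ s)
    (ha' : ∀ s ∈ Set.Ioo p q, HasDerivAt a (ε₂ * κ s * b s) s)
    (hb' : ∀ s ∈ Set.Ioo p q,
      HasDerivAt b (-(ε₁ * κ s * a s) - ε₃ * (τ s - 1) * c s) s)
    (hc' : ∀ s ∈ Set.Ioo p q, HasDerivAt c (ε₂ * (τ s - 1) * b s) s)
    (hwhirl : ∀ s ∈ Set.Ioo p q, a s = ϱ * b s)
    (hκpos : ∀ s ∈ Set.Ioo p q, 0 < κ s)
    (ha0 : ∀ s ∈ Set.Ioo p q, a s ≠ 0)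
    (hτ1 : ∀ s ∈ Set.Ioo p q, τ s ≠ 1)
    (hA0 : A ≠ 0) :
    ∀ s ∈ Set.Ioo p q,
      deriv τ s = (τ s - 1) *
        (ε₂ * ε₃ * (τ s - 1) ^ 2 / (ϱ * κ s * A)
          + deriv κ s / κ s
          + ε₂ * κ s / ϱ) := by
  have hε₃sq : ε₃ ^ 2 = 1 := by rcases hε₃ with h | h <;> rw [h] <;> norm_num
  have hAϱ : ϱ ^ 2 * A = ε₁ * ϱ ^ 2 + ε₂ := by
    rw [hAdef]; field_simp
  -- key algebraic consequence of the whirl condition: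
  -- c (τ - 1) = -ε₃ ϱ A κ b
  have key : ∀ t ∈ Set.Ioo p q,
      c t * (τ t - 1) = -(ε₃ * ϱ * A) * (κ t * b t) := by
    intro t ht
    have hJ : Set.Ioo p q ∈ nhds t := isOpen_Ioo.mem_nhds ht
    have haϱ : HasDerivAt a
        (ϱ * (-(ε₁ * κ t * a t) - ε₃ * (τ t - 1) * c t)) t := by
      refine HasDerivAt.congr_of_eventuallyEq ((hb' t ht).const_mul ϱ) ?_
      filter_upwards [hJ] with u hu using hwhirl u hu
    have heq1 : ε₂ * κ t * b t
        = ϱ * (-(ε₁ * κ t * a t) - ε₃ * (τ t - 1) * c t) :=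
      (ha' t ht).unique haϱ
    rw [hwhirl t ht] at heq1
    have h2 : ϱ * (c t * (τ t - 1)) = ϱ * (-(ε₃ * ϱ * A) * (κ t * b t)) := by
      linear_combination ε₃ * heq1 - (ϱ * (τ t - 1) * c t) * hε₃sq
        + (ε₃ * κ t * b t) * hAϱ
    exact mul_left_cancel₀ hϱ h2
  intro s hs
  have hJ : Set.Ioo p q ∈ nhds s := isOpen_Ioo.mem_nhds hs
  have hf : τ s - 1 ≠ 0 := sub_ne_zero.mpr (hτ1 s hs)
  have hκ0 : κ s ≠ 0 := ne_of_gt (hκpos s hs)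
  have hb0 : b s ≠ 0 := by
    intro h
    exact ha0 s hs (by rw [hwhirl s hs, h, mul_zero])
  have hκs : HasDerivAt κ (deriv κ s) s := (hκdiff s hs).hasDerivAt
  have hτs : HasDerivAt τ (deriv τ s) s := (hτdiff s hs).hasDerivAt
  have hnum : HasDerivAt (fun t => κ t * b t)
      (deriv κ s * b s + κ s * (-(ε₁ * κ s * a s) - ε₃ * (τ s - 1) * c s)) s :=
    hκs.mul (hb' s hs)
  have hden : HasDerivAt (fun t => τ t - 1) (deriv τ s) s := by
    simpa using hτs.sub_const 1
  have hg : HasDerivAt (fun t => -(ε₃ * ϱ * A) * (κ t * b t / (τ t - 1)))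
      (-(ε₃ * ϱ * A) *
        (((deriv κ s * b s + κ s * (-(ε₁ * κ s * a s) - ε₃ * (τ s - 1) * c s))
            * (τ s - 1) - κ s * b s * deriv τ s) / (τ s - 1) ^ 2)) s :=
    (hnum.div hden hf).const_mul (-(ε₃ * ϱ * A))
  have hcg : HasDerivAt c
      (-(ε₃ * ϱ * A) *
        (((deriv κ s * b s + κ s * (-(ε₁ * κ s * a s) - ε₃ * (τ s - 1) * c s))
            * (τ s - 1) - κ s * b s * deriv τ s) / (τ s - 1) ^ 2)) s := by
    refine HasDerivAt.congr_of_eventuallyEq hg ?_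
    filter_upwards [hJ] with u hu
    have hfu : τ u - 1 ≠ 0 := sub_ne_zero.mpr (hτ1 u hu)
    rw [mul_div_assoc'] at *
    rw [eq_div_iff hfu]
    exact key u hu
  have heq2 : ε₂ * (τ s - 1) * b s
      = -(ε₃ * ϱ * A) *
        (((deriv κ s * b s + κ s * (-(ε₁ * κ s * a s) - ε₃ * (τ s - 1) * c s))
            * (τ s - 1) - κ s * b s * deriv τ s) / (τ s - 1) ^ 2) :=
    (hc' s hs).unique hcg
  have heq3 : ε₂ * (τ s - 1) * b s * (τ s - 1) ^ 2
      = -(ε₃ * ϱ * A) *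
        ((deriv κ s * b s + κ s * (-(ε₁ * κ s * a s) - ε₃ * (τ s - 1) * c s))
            * (τ s - 1) - κ s * b s * deriv τ s) := by
    rw [heq2]; field_simp
  rw [hwhirl s hs] at heq3
  have hkey := key s hs
  have hmain : deriv τ s * (ϱ * κ s * A) * b s
      = ((τ s - 1) * (ε₂ * ε₃ * (τ s - 1) ^ 2 + ϱ * A * deriv κ s
          + ε₂ * A * κ s ^ 2)) * b s := by
    linear_combination (-ε₃) * heq3
      + (-(ε₃ ^ 3 * ϱ * A * κ s * (τ s - 1))) * hkey
      + (A * κ s ^ 2 * b s * (τ s - 1)) * hAϱ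
      + (-(ϱ * κ s * A * b s * deriv τ s) + ϱ * A * deriv κ s * b s * (τ s - 1)
          - ε₁ * ϱ ^ 2 * A * κ s ^ 2 * b s * (τ s - 1)
          + 2 * ϱ ^ 2 * A ^ 2 * κ s ^ 2 * b s * (τ s - 1)
          + (ε₃ ^ 2 - 1) * ϱ ^ 2 * A ^ 2 * κ s ^ 2 * b s * (τ s - 1)) * hε₃sq
  have hmain2 : deriv τ s * (ϱ * κ s * A)
      = (τ s - 1) * (ε₂ * ε₃ * (τ s - 1) ^ 2 + ϱ * A * deriv κ s
          + ε₂ * A * κ s ^ 2) := mul_right_cancel₀ hb0 hmain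
  have hϱκA : ϱ * κ s * A ≠ 0 := mul_ne_zero (mul_ne_zero hϱ hκ0) hA0
  field_simp
  linear_combination hmain2
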